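/- Let R be a ring, let N and M be ℤ-indexed chain complexes of R-modules, let (f, g, φ) be a contraction from N to M, and let δ be a perturbation of N that is pointwise nilpotent with respect to φ. Define, for each x, Σx = Σ_{i≥0} (−1)^i (φδ)^i x (a finite sum by pointwise nilpotence), and set ∂_δ = f ∘ δ ∘ Σ ∘ g, f_δ = f ∘ (id − δ ∘ Σ ∘ φ), g_δ = Σ ∘ g, φ_δ = Σ ∘ φ. Then ∂_M + ∂_δ is a differential on the underlying graded module of M, ∂_N + δ is a differential on the underlying graded module of N, and (f_δ, g_δ, φ_δ) is a contraction from the chain complex (N, ∂_N + δ) to the chain complex (M, ∂_M + ∂_δ). -/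

import Mathlib

/-- A contraction between ℤ-graded chain complexes of `R`-modules, presented via total
modules `N` and `M` with internal ℤ-gradings `𝒩`, `ℳ`, differentials `dN`, `dM` of
degree `-1` squaring to zero, chain maps `f : N → M`, `g : M → N` of degree `0`, and a
homotopy operator `φ : N → N` of degree `+1`, satisfying
`f ∘ g = id`, `g ∘ f + φ ∘ dN + dN ∘ φ = id`, `f ∘ φ = 0`, `φ ∘ g = 0`, `φ ∘ φ = 0`. -/
structure Contraction (R : Type) [Ring R]
    (N : Type) [AddCommGroup N] [Module R N]
    (M : Type) [AddCommGroup M] [Module R M]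
    (𝒩 : ℤ → Submodule R N) (ℳ : ℤ → Submodule R M)
    (dN : N →ₗ[R] N) (dM : M →ₗ[R] M)
    (f : N →ₗ[R] M) (g : M →ₗ[R] N) (φ : N →ₗ[R] N) : Prop where
  gradedN : DirectSum.IsInternal 𝒩
  gradedM : DirectSum.IsInternal ℳ
  dN_deg : ∀ i : ℤ, ∀ x ∈ 𝒩 i, dN x ∈ 𝒩 (i - 1)
  dM_deg : ∀ i : ℤ, ∀ x ∈ ℳ i, dM x ∈ ℳ (i - 1)
  dN_sq : dN ∘ₗ dN = 0
  dM_sq : dM ∘ₗ dM = 0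
  f_deg : ∀ i : ℤ, ∀ x ∈ 𝒩 i, f x ∈ ℳ i
  g_deg : ∀ i : ℤ, ∀ x ∈ ℳ i, g x ∈ 𝒩 i
  φ_deg : ∀ i : ℤ, ∀ x ∈ 𝒩 i, φ x ∈ 𝒩 (i + 1)
  f_chain : dM ∘ₗ f = f ∘ₗ dN
  g_chain : dN ∘ₗ g = g ∘ₗ dM
  fg : f ∘ₗ g = LinearMap.id
  homotopy : g ∘ₗ f + φ ∘ₗ dN + dN ∘ₗ φ = LinearMap.id
  fφ : f ∘ₗ φ = 0
  φg : φ ∘ₗ g = 0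
  φφ : φ ∘ₗ φ = 0

/-- **Basic Perturbation Lemma.** Given a contraction `(f, g, φ)` from `N` to `M` and a
perturbation `δ` of `N` that is pointwise nilpotent with respect to `φ`, with
`S x = ∑_{i ≥ 0} (-1)^i (φδ)^i x`, the perturbed data
`∂_δ = f ∘ δ ∘ S ∘ g`, `f_δ = f ∘ (id - δ ∘ S ∘ φ)`, `g_δ = S ∘ g`, `φ_δ = S ∘ φ`
yields: `dM + ∂_δ` is a differential on the underlying graded module of `M`,
`dN + δ` is a differential on the underlying graded module of `N`, and
`(f_δ, g_δ, φ_δ)` is a contraction from `(N, dN + δ)` to `(M, dM + ∂_δ)`. -/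
theorem basic_perturbation_lemma
    (R : Type) [Ring R]
    (N : Type) [AddCommGroup N] [Module R N]
    (M : Type) [AddCommGroup M] [Module R M]
    (𝒩 : ℤ → Submodule R N) (ℳ : ℤ → Submodule R M)
    (dN : N →ₗ[R] N) (dM : M →ₗ[R] M)
    (f : N →ₗ[R] M) (g : M →ₗ[R] N) (φ : N →ₗ[R] N)
    (hc : Contraction R N M 𝒩 ℳ dN dM f g φ)
    -- `δ` is a perturbation of `N` ...
    (δ : N →ₗ[R] N)
    (δ_deg : ∀ i : ℤ, ∀ x ∈ 𝒩 i, δ x ∈ 𝒩 (i - 1))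
    (δ_pert : (dN + δ) ∘ₗ (dN + δ) = 0)
    -- ... pointwise nilpotent with respect to `φ`:
    (δ_nil : ∀ x : N, ∃ m : ℕ, ((φ ∘ₗ δ) ^ m) x = 0)
    -- `S x = ∑_{i ≥ 0} (-1)^i (φ ∘ δ)^i x`, a finite sum by pointwise nilpotence:
    (S : N →ₗ[R] N)
    (hS : ∀ (x : N) (m : ℕ), ((φ ∘ₗ δ) ^ m) x = 0 →
      S x = ∑ i ∈ Finset.range m, ((-1 : ℤ) ^ i) • (((φ ∘ₗ δ) ^ i) x)) :
    -- `dM + ∂_δ` is a differential on the underlying graded module of `M`: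
    (∀ i : ℤ, ∀ x ∈ ℳ i, (dM + f ∘ₗ δ ∘ₗ S ∘ₗ g) x ∈ ℳ (i - 1)) ∧
    ((dM + f ∘ₗ δ ∘ₗ S ∘ₗ g) ∘ₗ (dM + f ∘ₗ δ ∘ₗ S ∘ₗ g) = 0) ∧
    -- `dN + δ` is a differential on the underlying graded module of `N`:
    (∀ i : ℤ, ∀ x ∈ 𝒩 i, (dN + δ) x ∈ 𝒩 (i - 1)) ∧
    ((dN + δ) ∘ₗ (dN + δ) = 0) ∧
    -- `(f_δ, g_δ, φ_δ)` is a contraction from `(N, dN + δ)` to `(M, dM + ∂_δ)`: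
    Contraction R N M 𝒩 ℳ (dN + δ) (dM + f ∘ₗ δ ∘ₗ S ∘ₗ g)
      (f ∘ₗ (LinearMap.id - δ ∘ₗ S ∘ₗ φ)) (S ∘ₗ g) (S ∘ₗ φ) := by
  obtain ⟨gradedN, gradedM, dN_deg, dM_deg, dN_sq, dM_sq, f_deg, g_deg, φ_deg,
    f_chain, g_chain, fg, homotopy, fφ, φg, φφ⟩ := hc
  -- pointwise versions of the contraction identities
  have hφφ' : ∀ x : N, φ (φ x) = 0 := fun x => by
    simpa using LinearMap.ext_iff.mp φφ x
  have hfφ' : ∀ x : N, f (φ x) = 0 := fun x => by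
    simpa using LinearMap.ext_iff.mp fφ x
  have hφg' : ∀ x : M, φ (g x) = 0 := fun x => by
    simpa using LinearMap.ext_iff.mp φg x
  have hfg' : ∀ x : M, f (g x) = x := fun x => by
    simpa using LinearMap.ext_iff.mp fg x
  have hfc : ∀ y : N, dM (f y) = f (dN y) := fun y => by
    simpa using LinearMap.ext_iff.mp f_chain y
  have hgc : ∀ y : M, dN (g y) = g (dM y) := fun y => by
    simpa using LinearMap.ext_iff.mp g_chain y
  have hdM2 : ∀ y : M, dM (dM y) = 0 := fun y => by
    simpa using LinearMap.ext_iff.mp dM_sq y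
  -- the telescoping sum
  have sum_key : ∀ (x : N) (m : ℕ), ((φ ∘ₗ δ) ^ m) x = 0 →
      ∑ i ∈ Finset.range m, ((-1:ℤ)^i) • (((φ ∘ₗ δ) ^ (i+1)) x) = x - S x := by
    intro x m hm
    have e1 : ∀ i ∈ Finset.range m, ((-1:ℤ)^i) • (((φ ∘ₗ δ) ^ (i+1)) x)
        = (((-1:ℤ)^i) • (((φ ∘ₗ δ) ^ i) x) - ((-1:ℤ)^(i+1)) • (((φ ∘ₗ δ) ^ (i+1)) x))
          - ((-1:ℤ)^i) • (((φ ∘ₗ δ) ^ i) x) := by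
      intro i _
      have : ((-1:ℤ)^(i+1)) • (((φ ∘ₗ δ) ^ (i+1)) x)
          = -(((-1:ℤ)^i) • (((φ ∘ₗ δ) ^ (i+1)) x)) := by
        rw [pow_succ]
        simp [mul_smul]
      rw [this]; abel
    calc ∑ i ∈ Finset.range m, ((-1:ℤ)^i) • (((φ ∘ₗ δ) ^ (i+1)) x)
        = ∑ i ∈ Finset.range m,
            ((((-1:ℤ)^i) • (((φ ∘ₗ δ) ^ i) x) - ((-1:ℤ)^(i+1)) • (((φ ∘ₗ δ) ^ (i+1)) x))
              - ((-1:ℤ)^i) • (((φ ∘ₗ δ) ^ i) x)) := Finset.sum_congr rfl e1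
      _ = (∑ i ∈ Finset.range m,
            (((-1:ℤ)^i) • (((φ ∘ₗ δ) ^ i) x) - ((-1:ℤ)^(i+1)) • (((φ ∘ₗ δ) ^ (i+1)) x)))
          - ∑ i ∈ Finset.range m, ((-1:ℤ)^i) • (((φ ∘ₗ δ) ^ i) x) := Finset.sum_sub_distrib _ _
      _ = (((-1:ℤ)^0) • (((φ ∘ₗ δ) ^ 0) x) - ((-1:ℤ)^m) • (((φ ∘ₗ δ) ^ m) x)) - S x := by
          rw [Finset.sum_range_sub' (fun i => ((-1:ℤ)^i) • (((φ ∘ₗ δ) ^ i) x)), hS x m hm]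
      _ = x - S x := by simp [hm]
  have key1 : ∀ x : N, (φ ∘ₗ δ) (S x) = x - S x := by
    intro x
    obtain ⟨m, hm⟩ := δ_nil x
    rw [← sum_key x m hm]
    conv_lhs => rw [hS x m hm]
    rw [map_sum]
    refine Finset.sum_congr rfl fun i _ => ?_
    rw [map_zsmul]
    congr 1
    simp [pow_succ', Module.End.mul_apply]
  have key2 : ∀ x : N, S ((φ ∘ₗ δ) x) = x - S x := by
    intro x
    obtain ⟨m, hm⟩ := δ_nil x
    have h1 : ((φ ∘ₗ δ) ^ (m+1)) x = 0 := by
      rw [pow_succ', Module.End.mul_apply, hm, map_zero]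
    have hm' : ((φ ∘ₗ δ) ^ m) ((φ ∘ₗ δ) x) = 0 := by
      simpa [pow_succ, Module.End.mul_apply] using h1
    rw [hS _ m hm', ← sum_key x m hm]
    refine Finset.sum_congr rfl fun i _ => ?_
    have : ((φ ∘ₗ δ) ^ i) ((φ ∘ₗ δ) x) = ((φ ∘ₗ δ) ^ (i+1)) x := by
      simp [pow_succ, Module.End.mul_apply]
    rw [this]
  have keyφ : ∀ x : N, φ (S x) = φ x := by
    intro x
    obtain ⟨m, hm⟩ := δ_nil x
    have h1 : ((φ ∘ₗ δ) ^ (m+1)) x = 0 := by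
      rw [pow_succ', Module.End.mul_apply, hm, map_zero]
    rw [hS x (m+1) h1, map_sum, Finset.sum_eq_single 0]
    · simp
    · intro i hi hne
      obtain ⟨j, rfl⟩ := Nat.exists_eq_succ_of_ne_zero hne
      have : φ (((φ ∘ₗ δ) ^ (j+1)) x) = 0 := by
        rw [pow_succ', Module.End.mul_apply]
        exact hφφ' _
      rw [map_zsmul, this, smul_zero]
    · intro h; simp at h
  have keyf : ∀ x : N, f (S x) = f x := by
    intro x
    obtain ⟨m, hm⟩ := δ_nil x
    have h1 : ((φ ∘ₗ δ) ^ (m+1)) x = 0 := by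
      rw [pow_succ', Module.End.mul_apply, hm, map_zero]
    rw [hS x (m+1) h1, map_sum, Finset.sum_eq_single 0]
    · simp
    · intro i hi hne
      obtain ⟨j, rfl⟩ := Nat.exists_eq_succ_of_ne_zero hne
      have : f (((φ ∘ₗ δ) ^ (j+1)) x) = 0 := by
        rw [pow_succ', Module.End.mul_apply]
        exact hfφ' _
      rw [map_zsmul, this, smul_zero]
    · intro h; simp at h
  -- S preserves degrees
  have S_deg : ∀ i : ℤ, ∀ x ∈ 𝒩 i, S x ∈ 𝒩 i := by
    intro i x hx
    obtain ⟨m, hm⟩ := δ_nil x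
    rw [hS x m hm]
    refine Submodule.sum_mem _ fun j hjr => ?_
    clear hjr
    have hj : ((φ ∘ₗ δ) ^ j) x ∈ 𝒩 i := by
      induction j with
      | zero => simpa using hx
      | succ k ih =>
        rw [pow_succ', Module.End.mul_apply]
        have h1 : δ (((φ ∘ₗ δ) ^ k) x) ∈ 𝒩 (i - 1) := δ_deg i _ ih
        have h2 : φ (δ (((φ ∘ₗ δ) ^ k) x)) ∈ 𝒩 (i - 1 + 1) := φ_deg _ _ h1
        have e : i - 1 + 1 = i := by omega
        rw [e] at h2
        exact h2
    exact Submodule.smul_of_tower_mem _ _ hj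
  -- map-level identities in the endomorphism ring of N
  have H1 : φ * δ * S = 1 - S := by
    ext x
    have := key1 x
    simpa [Module.End.mul_apply, LinearMap.sub_apply, Module.End.one_apply,
      LinearMap.comp_apply] using this
  have H2 : S * (φ * δ) = 1 - S := by
    ext x
    have := key2 x
    simpa [Module.End.mul_apply, LinearMap.sub_apply, Module.End.one_apply,
      LinearMap.comp_apply] using this
  have Hφ : φ * S = φ := by
    ext x
    have := keyφ x
    simpa [Module.End.mul_apply] using this
  have HfS : f ∘ₗ S = f := by
    ext x
    have := keyf x
    simpa [LinearMap.comp_apply] using this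
  have Hp : dN * δ + δ * dN + δ * δ = 0 := by
    have h : (dN + δ) * (dN + δ) = 0 := δ_pert
    have h2 : dN * dN = 0 := dN_sq
    linear_combination (norm := noncomm_ring) h - h2
  have Hu : (g ∘ₗ f) + φ * dN + dN * φ = 1 := homotopy
  have Hφφ : φ * φ = 0 := φφ
  have G1 : dN * (1 - δ*S*φ) + δ*S*(g ∘ₗ f)*(1 - δ*S*φ) = (1 - δ*S*φ) * (dN + δ) := by
    linear_combination (norm := noncomm_ring) δ*H2 + (δ*S)*Hu*(1 - δ*S*φ)
      + (δ*S*dN)*H1*φ - (1 - δ*S*φ)*Hp*(S*φ) - δ*H2*(dN*S*φ) - δ*H2*(δ*S*φ)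
  have G2 : S*dN + S*(g ∘ₗ f)*(δ*S) = (dN + δ) * S := by
    linear_combination (norm := noncomm_ring) (-(S*φ))*Hp*S + H2*(dN*S)
      + H2*(δ*S) - (S*dN)*H1 + S*Hu*(δ*S)
  have G3 : S*(g ∘ₗ f)*(1 - δ*S*φ) + (S*φ)*(dN+δ) + (dN+δ)*(S*φ) = 1 := by
    linear_combination (norm := noncomm_ring) H2 + (S*φ)*Hp*(S*φ) - H2*(dN*S*φ)
      - H2*(δ*S*φ) + (S*dN)*H1*φ + S*Hu*(1 - δ*S*φ)
  have G4 : dN*(δ*S) + (δ*S)*dN + (δ*S)*(g ∘ₗ f)*(δ*S) = 0 := by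
    linear_combination (norm := noncomm_ring) (δ*S)*Hu*(δ*S) - (δ*S*dN)*H1
      - (δ*S*φ)*Hp*S + δ*H2*(dN*S) + δ*H2*(δ*S) + Hp*S
  have GpS : (1 - δ*S*φ) * S = S - δ*S*φ := by
    linear_combination (norm := noncomm_ring) (-(δ*S))*Hφ
  -- degree facts for the perturbed structure
  have D_deg : ∀ i : ℤ, ∀ x ∈ ℳ i, (dM + f ∘ₗ δ ∘ₗ S ∘ₗ g) x ∈ ℳ (i - 1) := by
    intro i x hx
    simp only [LinearMap.add_apply, LinearMap.comp_apply]
    exact add_mem (dM_deg i x hx) (f_deg _ _ (δ_deg _ _ (S_deg _ _ (g_deg _ _ hx))))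
  have dN'_deg : ∀ i : ℤ, ∀ x ∈ 𝒩 i, (dN + δ) x ∈ 𝒩 (i - 1) := by
    intro i x hx
    simp only [LinearMap.add_apply]
    exact add_mem (dN_deg i x hx) (δ_deg i x hx)
  have Dsq : (dM + f ∘ₗ δ ∘ₗ S ∘ₗ g) ∘ₗ (dM + f ∘ₗ δ ∘ₗ S ∘ₗ g) = 0 := by
    ext x
    have h := LinearMap.ext_iff.mp G4 (g x)
    simp only [Module.End.mul_apply, LinearMap.add_apply, LinearMap.comp_apply,
      LinearMap.zero_apply] at h
    rw [hgc] at h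
    have h2 := congrArg f h
    simp only [map_add, map_zero] at h2
    simp only [LinearMap.comp_apply, LinearMap.add_apply, LinearMap.zero_apply,
      map_add, hfc, hdM2]
    abel_nf at h2 ⊢
    rw [← h2]
  refine ⟨D_deg, Dsq, dN'_deg, δ_pert, ?_⟩
  constructor
  · exact gradedN
  · exact gradedM
  · exact dN'_deg
  · exact D_deg
  · exact δ_pert
  · exact Dsq
  · -- f' degree
    intro i x hx
    have h1 : φ x ∈ 𝒩 (i+1) := φ_deg i x hx
    have h2 : S (φ x) ∈ 𝒩 (i+1) := S_deg _ _ h1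
    have h3 : δ (S (φ x)) ∈ 𝒩 i := by
      have := δ_deg _ _ h2
      have e : i + 1 - 1 = i := by omega
      rwa [e] at this
    simp only [LinearMap.comp_apply, LinearMap.sub_apply, LinearMap.id_apply, map_sub]
    exact sub_mem (f_deg i x hx) (f_deg i _ h3)
  · -- g' degree
    intro i x hx
    simp only [LinearMap.comp_apply]
    exact S_deg _ _ (g_deg _ _ hx)
  · -- φ' degree
    intro i x hx
    simp only [LinearMap.comp_apply]
    exact S_deg _ _ (φ_deg _ _ hx)
  · -- f' chain map
    ext x
    have h := LinearMap.ext_iff.mp G1 x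
    simp only [Module.End.mul_apply, LinearMap.add_apply, LinearMap.sub_apply,
      Module.End.one_apply, LinearMap.comp_apply] at h
    have h2 := congrArg f h
    simp only [map_add, map_sub] at h2
    simp only [LinearMap.comp_apply, LinearMap.add_apply, LinearMap.sub_apply,
      LinearMap.id_apply, map_add, map_sub, hfc]
    abel_nf at h2 ⊢
    rw [h2]
  · -- g' chain map
    ext x
    have h := LinearMap.ext_iff.mp G2 (g x)
    simp only [Module.End.mul_apply, LinearMap.add_apply, LinearMap.comp_apply] at h
    rw [hgc] at h
    simp only [LinearMap.comp_apply, LinearMap.add_apply, map_add]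
    rw [← h]
  · -- f' ∘ g' = id
    ext x
    simp only [LinearMap.comp_apply, LinearMap.sub_apply, LinearMap.id_apply,
      LinearMap.id_coe, id_eq, map_sub, keyφ, hφg', map_zero, sub_zero, keyf, hfg']
  · -- homotopy
    exact G3
  · -- f' ∘ φ' = 0
    ext x
    simp only [LinearMap.comp_apply, LinearMap.sub_apply, LinearMap.id_apply,
      LinearMap.id_coe, id_eq, map_sub, keyφ, hφφ', map_zero, sub_zero, keyf, hfφ',
      LinearMap.zero_apply]
  · -- φ' ∘ g' = 0
    ext x
    simp only [LinearMap.comp_apply, keyφ, hφg', map_zero, LinearMap.zero_apply]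
  · -- φ' ∘ φ' = 0
    ext x
    simp only [LinearMap.comp_apply, keyφ, hφφ', map_zero, LinearMap.zero_apply]
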